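/- arXiv:0707.4501 — 2 statements merged into one kernel-verified Lean document; each statement's English description precedes it below -/
import Mathlib

section
/- Let a : ℝ^m → ℝⁿ be continuous, let b ∈ ℝⁿ have all components b_i > 0, and define f(x,y) = (Σ_i a_i(x)y_i)/(Σ_i b_iy_i) for x ∈ ℝ^m and y ∈ ℝ₊ⁿ∖{0}. Then for every x₀ ∈ ℝ^m, the lim inf of f(x,y) as x → x₀ and y → 0 with y ∈ ℝ₊ⁿ∖{0} equals min_{i∈{1,…,n}} a_i(x₀)/b_i. Moreover, if f is extended by f(x,0) := min_{i∈{1,…,n}} a_i(x)/b_i, then f is lower semicontinuous on ℝ^m × ℝ₊ⁿ and its restriction to ℝ^m × {0} is continuous. -/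
open Filter Set Topology

/-- The extension of `f(x,y) = (Σᵢ aᵢ(x)yᵢ)/(Σᵢ bᵢyᵢ)` by `f(x,0) = minᵢ aᵢ(x)/bᵢ`. -/
noncomputable def Fext (m n : ℕ) (a : (Fin m → ℝ) → Fin n → ℝ) (b : Fin n → ℝ)
    (p : (Fin m → ℝ) × (Fin n → ℝ)) : ℝ :=
  if p.2 = 0 then ⨅ i, a p.1 i / b i
  else (∑ i, a p.1 i * p.2 i) / (∑ i, b i * p.2 i)

/-- The liminf lemma: as `x → x₀` and `y → 0` in the nonnegative orthant minus the origin,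
`liminf (a(x)·y)/(b·y) = minᵢ aᵢ(x₀)/bᵢ`; the extended function is lower semicontinuous on
`ℝ^m × ℝ₊ⁿ` and its restriction to `ℝ^m × {0}` is continuous. -/
theorem liminf_ratio_lemma
    (m n : ℕ) (hn : 0 < n)
    (a : (Fin m → ℝ) → Fin n → ℝ) (ha : Continuous a)
    (b : Fin n → ℝ) (hb : ∀ i, 0 < b i) :
    (∀ x₀ : Fin m → ℝ,
      Filter.liminf
        (fun p : (Fin m → ℝ) × (Fin n → ℝ) =>
          (∑ i, a p.1 i * p.2 i) / (∑ i, b i * p.2 i))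
        (nhdsWithin (x₀, 0) {p : (Fin m → ℝ) × (Fin n → ℝ) | (∀ i, 0 ≤ p.2 i) ∧ p.2 ≠ 0})
      = ⨅ i, a x₀ i / b i) ∧
    LowerSemicontinuousOn (Fext m n a b)
      {p : (Fin m → ℝ) × (Fin n → ℝ) | ∀ i, 0 ≤ p.2 i} ∧
    Continuous (fun x : Fin m → ℝ => Fext m n a b (x, 0)) := by
  haveI : Nonempty (Fin n) := ⟨⟨0, hn⟩⟩
  set g : (Fin m → ℝ) → ℝ := fun x => ⨅ i, a x i / b i with hgdef
  -- continuity of g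
  have hgc : Continuous g := by
    have h1 : Continuous fun x : Fin m → ℝ =>
        Finset.univ.inf' Finset.univ_nonempty (fun i => a x i / b i) :=
      Continuous.finset_inf'_apply Finset.univ_nonempty
        (fun i _ => ((continuous_apply i).comp ha).div_const _)
    have h2 : (fun x : Fin m → ℝ =>
        Finset.univ.inf' Finset.univ_nonempty (fun i => a x i / b i)) = g := by
      funext x
      exact Finset.inf'_univ_eq_ciInf _
    rwa [h2] at h1
  -- positivity of denominator
  have hden : ∀ y : Fin n → ℝ, (∀ i, 0 ≤ y i) → y ≠ 0 → 0 < ∑ i, b i * y i := by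
    intro y hy hy0
    obtain ⟨j, hj⟩ : ∃ j, y j ≠ 0 := by
      by_contra h
      push_neg at h
      exact hy0 (funext fun i => h i)
    exact Finset.sum_pos' (fun i _ => mul_nonneg (hb i).le (hy i))
      ⟨j, Finset.mem_univ j, mul_pos (hb j) ((hy j).lt_of_ne (Ne.symm hj))⟩
  -- key inequality
  have hkey : ∀ (x : Fin m → ℝ) (y : Fin n → ℝ), (∀ i, 0 ≤ y i) → y ≠ 0 →
      g x ≤ (∑ i, a x i * y i) / (∑ i, b i * y i) := by
    intro x y hy hy0
    rw [le_div_iff₀ (hden y hy hy0)]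
    calc g x * ∑ i, b i * y i = ∑ i, g x * (b i * y i) := Finset.mul_sum _ _ _
      _ ≤ ∑ i, a x i * y i := by
          refine Finset.sum_le_sum fun i _ => ?_
          have h1 : g x ≤ a x i / b i := ciInf_le (Finite.bddBelow_range _) i
          have h2 := mul_le_mul_of_nonneg_right h1 (mul_nonneg (hb i).le (hy i))
          have hbne : b i ≠ 0 := (hb i).ne'
          calc g x * (b i * y i) ≤ a x i / b i * (b i * y i) := h2
            _ = a x i * y i := by field_simp
  -- on the orthant, Fext dominates g ∘ fst
  have hge : ∀ q : (Fin m → ℝ) × (Fin n → ℝ), (∀ i, 0 ≤ q.2 i) →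
      g q.1 ≤ Fext m n a b q := by
    intro q hq
    by_cases h : q.2 = 0
    · simp [Fext, h, hgdef]
    · simp only [Fext, if_neg h]
      exact hkey q.1 q.2 hq h
  refine ⟨?_, ?_, ?_⟩
  · -- the liminf statement
    intro x₀
    set S : Set ((Fin m → ℝ) × (Fin n → ℝ)) :=
      {p | (∀ i, 0 ≤ p.2 i) ∧ p.2 ≠ 0} with hSdef
    set F := nhdsWithin (x₀, (0 : Fin n → ℝ)) S with hFdef
    set fρ : (Fin m → ℝ) × (Fin n → ℝ) → ℝ :=
      fun p => (∑ i, a p.1 i * p.2 i) / (∑ i, b i * p.2 i) with hfρ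
    obtain ⟨j, hj⟩ : ∃ j, ∀ i, a x₀ j / b j ≤ a x₀ i / b i :=
      Finite.exists_min fun i => a x₀ i / b i
    have hgx0 : g x₀ = a x₀ j / b j :=
      le_antisymm (ciInf_le (Finite.bddBelow_range _) j) (le_ciInf hj)
    -- the approximating sequence
    set y : ℕ → Fin n → ℝ := fun k i => if i = j then (1 : ℝ) / (k + 1) else 0 with hydef
    have hpos : ∀ k : ℕ, (0 : ℝ) < 1 / (k + 1) := fun k => by positivity
    have hyS : ∀ k, ((x₀, y k) : (Fin m → ℝ) × (Fin n → ℝ)) ∈ S := by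
      intro k
      constructor
      · intro i
        by_cases h : i = j
        · simp only [hydef, if_pos h]
          exact (hpos k).le
        · simp [hydef, h]
      · intro h
        have := congrFun h j
        simp [hydef] at this
        exact absurd this (by positivity)
    have htend : Tendsto (fun k => ((x₀, y k) : (Fin m → ℝ) × (Fin n → ℝ))) atTop F := by
      rw [hFdef]
      refine tendsto_nhdsWithin_of_tendsto_nhds_of_eventually_within _ ?_
        (Eventually.of_forall hyS)
      refine Tendsto.prodMk_nhds tendsto_const_nhds ?_
      rw [tendsto_pi_nhds]
      intro i
      by_cases h : i = j
      · simpa [hydef, h] using tendsto_one_div_add_atTop_nhds_zero_nat (𝕜 := ℝ)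
      · simpa [hydef, h] using tendsto_const_nhds
    have hval : ∀ k, fρ (x₀, y k) = a x₀ j / b j := by
      intro k
      have h1 : (∑ i, a x₀ i * y k i) = a x₀ j * (1 / (k + 1)) := by
        simp [hydef, mul_ite, mul_zero]
      have h2 : (∑ i, b i * y k i) = b j * (1 / (k + 1)) := by
        simp [hydef, mul_ite, mul_zero]
      simp only [hfρ, h1, h2]
      exact mul_div_mul_right _ _ (hpos k).ne'
    haveI hFne : F.NeBot := htend.neBot
    have hevge : ∀ᶠ p in F, g p.1 ≤ fρ p := by
      filter_upwards [self_mem_nhdsWithin] with p hp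
      exact hkey p.1 p.2 hp.1 hp.2
    have htg : Tendsto (fun p : (Fin m → ℝ) × (Fin n → ℝ) => g p.1) F (𝓝 (g x₀)) :=
      ((hgc.comp continuous_fst).continuousAt (x := ((x₀, 0) : (Fin m → ℝ) × (Fin n → ℝ)))).mono_left
        nhdsWithin_le_nhds
    have hfreq : ∃ᶠ p in F, fρ p ≤ g x₀ :=
      htend.frequently (Frequently.of_forall fun k => by rw [hval k, hgx0])
    have hbddF : F.IsBoundedUnder (· ≥ ·) fρ := by
      refine ⟨g x₀ - 1, ?_⟩
      have h1 : ∀ᶠ p in F, g x₀ - 1 < g p.1 :=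
        htg.eventually (eventually_gt_nhds (by linarith))
      rw [eventually_map]
      filter_upwards [h1, hevge] with p hp1 hp2
      exact le_trans hp1.le hp2
    have hcob : F.IsCoboundedUnder (· ≥ ·) fρ :=
      IsCoboundedUnder.of_frequently_le hfreq
    have hle : liminf fρ F ≤ g x₀ := liminf_le_of_frequently_le hfreq hbddF
    have hge' : g x₀ ≤ liminf fρ F := by
      rw [← htg.liminf_eq]
      exact liminf_le_liminf hevge (htg.isBoundedUnder_ge) hcob
    exact le_antisymm hle hge'
  · -- lower semicontinuity
    intro p hp
    by_cases h0 : p.2 = 0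
    · intro c hc
      have hc' : c < g p.1 := by
        simpa [Fext, h0, hgdef] using hc
      have h1 : ∀ᶠ q in 𝓝 p, c < g q.1 :=
        ((hgc.comp continuous_fst).continuousAt).eventually (eventually_gt_nhds hc')
      filter_upwards [nhdsWithin_le_nhds h1, self_mem_nhdsWithin] with q hq1 hq2
      exact lt_of_lt_of_le hq1 (hge q hq2)
    · -- continuity point
      have hnum : Continuous fun q : (Fin m → ℝ) × (Fin n → ℝ) => ∑ i, a q.1 i * q.2 i :=
        continuous_finset_sum _ fun i _ =>
          (((continuous_apply i).comp (ha.comp continuous_fst))).mul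
            ((continuous_apply i).comp continuous_snd)
      have hdenc : Continuous fun q : (Fin m → ℝ) × (Fin n → ℝ) => ∑ i, b i * q.2 i :=
        continuous_finset_sum _ fun i _ =>
          continuous_const.mul ((continuous_apply i).comp continuous_snd)
      have hca : ContinuousAt
          (fun q : (Fin m → ℝ) × (Fin n → ℝ) =>
            (∑ i, a q.1 i * q.2 i) / (∑ i, b i * q.2 i)) p :=
        (hnum.continuousAt).div (hdenc.continuousAt) (hden p.2 hp h0).ne'
      have hopen : IsOpen {q : (Fin m → ℝ) × (Fin n → ℝ) | q.2 ≠ 0} :=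
        (isClosed_singleton.preimage continuous_snd).isOpen_compl
      have heq : (fun q : (Fin m → ℝ) × (Fin n → ℝ) =>
            (∑ i, a q.1 i * q.2 i) / (∑ i, b i * q.2 i)) =ᶠ[𝓝 p] Fext m n a b := by
        filter_upwards [hopen.mem_nhds h0] with q hq
        simp [Fext, if_neg hq]
      have : ContinuousAt (Fext m n a b) p := hca.congr heq
      exact this.continuousWithinAt.lowerSemicontinuousWithinAt
  · -- continuity on the zero slice
    have : (fun x : Fin m → ℝ => Fext m n a b (x, 0)) = g := by
      funext x
      simp [Fext, hgdef]
    rw [this]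
    exact hgc
end

section
/- Fix μ ∈ [0, min_i(−1/q_ii)] and let A(μ) = Γ⁻¹(N̂P(μ) − I)K. A point (T̂, T̂*, V̂) ∈ ℝ₊^{2n+1} with T̂ > 0 and V̂ ≠ 0 is an equilibrium of Model I' if and only if: A(μ)V̂ = (1/T̂)V̂, T̂* = (N̂B)⁻¹(Γ + T̂K)V̂, and k'V̂ = f(T̂)/T̂. In particular, for such an equilibrium all components of (T̂*, V̂) are positive (respectively nonnegative) if and only if V̂ is componentwise positive (respectively nonnegative), i.e. 1/T̂ is an eigenvalue of A(μ) with a positive (nonnegative) eigenvector. -/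
open Matrix

/-- The matrix `A(μ) = Γ⁻¹ (N̂ P(μ) − I) K` with `P(μ) = I + μQ`. -/
noncomputable def AmuLoss (n : ℕ) (k γ N : Fin n → ℝ) (Q : Matrix (Fin n) (Fin n) ℝ) (μ : ℝ) :
    Matrix (Fin n) (Fin n) ℝ :=
  Matrix.diagonal (fun i => (γ i)⁻¹) * (Matrix.diagonal N * (1 + μ • Q) - 1) * Matrix.diagonal k

/-- Characterization of the nontrivial equilibria of Model I'
(`Ṫ = f(T) − (k'V)T`, `Ṫ* = P(μ)KVT − BT*`, `V̇ = N̂BT* − ΓV − KVT`): a point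
`(T̂, T̂*, V̂) ∈ ℝ₊^{2n+1}` with `T̂ > 0`, `V̂ ≠ 0` is an equilibrium iff
`A(μ)V̂ = (1/T̂)V̂`, `T̂* = (N̂B)⁻¹(Γ + T̂K)V̂` and `k'V̂ = f(T̂)/T̂`; in particular all
components of `(T̂*, V̂)` are positive (resp. nonnegative) iff `V̂` is positive
(resp. nonnegative). -/
theorem modelIp_equilibrium_characterization
    (n : ℕ) (hn : 2 ≤ n) (k β γ N : Fin n → ℝ)
    (hk : ∀ i, 0 < k i) (hβ : ∀ i, 0 < β i) (hγ : ∀ i, 0 < γ i) (hN : ∀ i, 0 < N i)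
    (Q : Matrix (Fin n) (Fin n) ℝ)
    (hQoff : ∀ i j, i ≠ j → 0 ≤ Q i j) (hQcol : ∀ j, ∑ i, Q i j = 0)
    (f : ℝ → ℝ) (hf : ContDiffOn ℝ 1 f (Set.Ici 0))
    (μ : ℝ) (hμ0 : 0 ≤ μ) (hμ1 : ∀ i, μ ≤ -1 / Q i i)
    (That : ℝ) (Tshat Vhat : Fin n → ℝ)
    (hThat : 0 < That) (hTshat : ∀ i, 0 ≤ Tshat i) (hVhat : ∀ i, 0 ≤ Vhat i)
    (hVne : Vhat ≠ 0) :
    -- equilibrium characterization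
    ((f That - (∑ i, k i * Vhat i) * That = 0 ∧
      (∀ i, (1 + μ • Q).mulVec (fun j => k j * Vhat j * That) i - β i * Tshat i = 0) ∧
      (∀ i, N i * β i * Tshat i - γ i * Vhat i - k i * Vhat i * That = 0))
     ↔
     ((AmuLoss n k γ N Q μ).mulVec Vhat = (1 / That) • Vhat ∧
      (∀ i, Tshat i = (γ i + That * k i) * Vhat i / (N i * β i)) ∧
      ∑ i, k i * Vhat i = f That / That)) ∧
    -- positivity / nonnegativity of equilibrium components
    ((f That - (∑ i, k i * Vhat i) * That = 0 ∧
      (∀ i, (1 + μ • Q).mulVec (fun j => k j * Vhat j * That) i - β i * Tshat i = 0) ∧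
      (∀ i, N i * β i * Tshat i - γ i * Vhat i - k i * Vhat i * That = 0)) →
      ((((∀ i, 0 < Tshat i) ∧ (∀ i, 0 < Vhat i)) ↔ (∀ i, 0 < Vhat i)) ∧
       (((∀ i, 0 ≤ Tshat i) ∧ (∀ i, 0 ≤ Vhat i)) ↔ (∀ i, 0 ≤ Vhat i)))) := by
  have hT : That ≠ 0 := hThat.ne'
  set P : Matrix (Fin n) (Fin n) ℝ := 1 + μ • Q with hP
  set w : Fin n → ℝ := fun j => k j * Vhat j with hw
  have hvw : (fun j => k j * Vhat j * That) = That • w := by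
    funext j; simp [hw, smul_eq_mul]; ring
  have hPw : ∀ i, P.mulVec (fun j => k j * Vhat j * That) i = That * P.mulVec w i := by
    intro i; rw [hvw, Matrix.mulVec_smul]; rfl
  have hA : ∀ i, (AmuLoss n k γ N Q μ).mulVec Vhat i
      = (γ i)⁻¹ * (N i * P.mulVec w i - k i * Vhat i) := by
    intro i
    have h1 : (Matrix.diagonal k).mulVec Vhat = w := by
      funext j; simp [Matrix.mulVec_diagonal, hw]
    have : (AmuLoss n k γ N Q μ).mulVec Vhat
        = (Matrix.diagonal (fun i => (γ i)⁻¹)).mulVec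
            ((Matrix.diagonal N * P - 1).mulVec w) := by
      rw [AmuLoss, ← hP, ← Matrix.mulVec_mulVec, ← Matrix.mulVec_mulVec, h1]
    rw [this]
    simp only [Matrix.sub_mulVec, Matrix.one_mulVec, ← Matrix.mulVec_mulVec,
      Matrix.mulVec_diagonal, Pi.sub_apply]
    rfl
  constructor
  · constructor
    · rintro ⟨h1, h2, h3⟩
      refine ⟨?_, ?_, ?_⟩
      · funext i
        have h2i := h2 i; rw [hPw i] at h2i
        have h3i := h3 i
        rw [hA i]
        have hVi : (1 / That) • Vhat i = Vhat i / That := by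
          simp [smul_eq_mul]; ring
        show (γ i)⁻¹ * (N i * P.mulVec w i - k i * Vhat i) = ((1 / That) • Vhat) i
        have : ((1 / That) • Vhat) i = Vhat i / That := by simp [smul_eq_mul]; ring
        rw [this]
        have hγi := (hγ i).ne'
        field_simp
        linear_combination N i * h2i + h3i
      · intro i
        have h3i := h3 i
        have hNi := (hN i).ne'
        have hβi := (hβ i).ne'
        field_simp
        linear_combination h3i
      · rw [eq_div_iff hT]; linarith [h1]
    · rintro ⟨h1, h2, h3⟩
      refine ⟨?_, ?_, ?_⟩
      · have h3' : (∑ i, k i * Vhat i) * That = f That := by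
          rw [h3]; field_simp
        linarith
      · intro i
        have h1i : (AmuLoss n k γ N Q μ).mulVec Vhat i = ((1 / That) • Vhat) i := by
          rw [h1]
        rw [hA i] at h1i
        have hVi : ((1 / That) • Vhat) i = Vhat i / That := by simp [smul_eq_mul]; ring
        rw [hVi] at h1i
        rw [hPw i, h2 i]
        have hγi := (hγ i).ne'
        have hNi := (hN i).ne'
        have hβi := (hβ i).ne'
        field_simp at h1i ⊢
        linear_combination h1i
      · intro i
        rw [h2 i]
        have hNi := (hN i).ne'
        have hβi := (hβ i).ne'
        field_simp
        ring
  · rintro ⟨h1, h2, h3⟩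
    have hTs : ∀ i, Tshat i = (γ i + That * k i) * Vhat i / (N i * β i) := by
      intro i
      have h3i := h3 i
      have hNi := (hN i).ne'
      have hβi := (hβ i).ne'
      field_simp
      linear_combination h3i
    constructor
    · constructor
      · exact fun h => h.2
      · intro h
        refine ⟨fun i => ?_, h⟩
        rw [hTs i]
        exact div_pos (mul_pos (add_pos (hγ i) (mul_pos hThat (hk i))) (h i))
          (mul_pos (hN i) (hβ i))
    · constructor
      · exact fun h => h.2
      · intro h
        refine ⟨fun i => ?_, h⟩
        rw [hTs i]
        exact div_nonneg (mul_nonneg (add_pos (hγ i) (mul_pos hThat (hk i))).le (h i))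
          (mul_pos (hN i) (hβ i)).le
end
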